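/- Let G be a group, A a commutative group, and H a subgroup of the product group G × A. Let P be a subgroup of G that is perfect (i.e., P equals its own commutator subgroup) and is contained in the image of H under the first projection G × A → G. Then P × {1} is contained in H; that is, for every g ∈ P the element (g, 1) lies in H. -/

import Mathlib

/-- If `H` is a subgroup of `G × A` with `A` commutative, and `P` is a perfect subgroup of `G`
contained in the image of `H` under the first projection, then `P × {1} ⊆ H`. -/
theorem stmt_5 (G A : Type*) [Group G] [CommGroup A] (H : Subgroup (G × A))
    (P : Subgroup G) (hperf : ⁅P, P⁆ = P)
    (hle : P ≤ H.map (MonoidHom.fst G A)) :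
    ∀ g ∈ P, ((g, 1) : G × A) ∈ H := by
  have key : P ≤ H.comap (MonoidHom.inl G A) := by
    rw [← hperf]
    rw [Subgroup.commutator_le]
    intro g hg h hh
    obtain ⟨⟨g', a⟩, hga, hg'⟩ := hle hg
    obtain ⟨⟨h', b⟩, hhb, hh'⟩ := hle hh
    simp only [MonoidHom.coe_fst] at hg' hh'
    subst hg' hh'
    have hmem : ((g', a) * (h', b) * (g', a)⁻¹ * (h', b)⁻¹ : G × A) ∈ H := H.mul_mem (H.mul_mem (H.mul_mem hga hhb) (H.inv_mem hga)) (H.inv_mem hhb)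
    open scoped commutatorElement in
    have heq : ((g', a) * (h', b) * (g', a)⁻¹ * (h', b)⁻¹ : G × A) = (⁅g', h'⁆, 1) := by
      simp [commutatorElement_def, Prod.ext_iff, mul_comm, mul_assoc, mul_left_comm]
    rw [heq] at hmem
    exact hmem
  intro g hg
  exact key hg
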